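/- arXiv:2104.09063 — 2 statements merged into one kernel-verified Lean document; each statement's English description precedes it below -/
import Mathlib

section
/- Let w be a word over Σ with ι(w) = k ≥ 1 and σ = |Σ|. If ι(w^s) − ι(w^{s−1}) = k for all s ∈ {1, …, σ}, then ι(w^s) = s·k for all s ∈ ℕ. -/
open List

variable {α : Type*}

/-- `w` is `k`-universal: every word of length `k` over the alphabet `α`
is a scattered factor (subsequence) of `w`. -/
def IsUniversal [Fintype α] (k : ℕ) (w : List α) : Prop :=
  ∀ u : List α, u.length = k → u.Sublist w

/-- The universality index `ι(w)`: the largest `k` such that `w` is `k`-universal. -/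
noncomputable def univIndex [Fintype α] (w : List α) : ℕ :=
  sSup {k | IsUniversal k w}

/-- The circular universality index `ζ(w)`: the largest `k` such that some
conjugate of `w` is `k`-universal. -/
noncomputable def circIndex [Fintype α] (w : List α) : ℕ :=
  sSup {k | ∃ u v : List α, w = u ++ v ∧ IsUniversal k (v ++ u)}

/-- `wpow w s = w^s`, the `s`-fold concatenation of `w`. -/
def wpow (w : List α) (s : ℕ) : List α := (List.replicate s w).flatten

/-- Auxiliary (fuelled) computation of the remainder of the arch factorisation:
greedily remove the shortest prefix containing every letter of the alphabet. -/
def remAux [Fintype α] [DecidableEq α] : ℕ → List α → List α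
  | 0, w => w
  | (n+1), w =>
    match (List.range' 1 w.length).find?
        (fun m => decide ((w.take m).toFinset = Finset.univ)) with
    | none => w
    | some m => remAux n (w.drop m)

/-- `rem w = r(w)`, the remainder of the arch factorisation of `w`. -/
def rem [Fintype α] [DecidableEq α] (w : List α) : List α := remAux w.length w

/-- Auxiliary (fuelled) computation of the list of arches of `w`. -/
def archesAux [Fintype α] [DecidableEq α] : ℕ → List α → List (List α)
  | 0, _ => []
  | (n+1), w =>
    match (List.range' 1 w.length).find?
        (fun m => decide ((w.take m).toFinset = Finset.univ)) with
    | none => []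
    | some m => (w.take m) :: archesAux n (w.drop m)

/-- `arches w`: the list `[arch₁(w), …, arch_{ι(w)}(w)]` of arches of `w`. -/
def arches [Fintype α] [DecidableEq α] (w : List α) : List (List α) :=
  archesAux w.length w

set_option linter.unusedSectionVars false

section MArchDev

variable [Fintype α] [DecidableEq α]

inductive MArch : List α → ℕ → List α → Prop
  | base (x : List α) (h : x.toFinset ≠ Finset.univ) : MArch x 0 x
  | step (a x : List α) (m : ℕ) (r : List α)
      (ha : a.toFinset = Finset.univ)
      (hmin : ∀ b : List α, b <+: a ++ x → b.toFinset = Finset.univ → a.length ≤ b.length)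
      (h : MArch x m r) : MArch (a ++ x) (m + 1) r

lemma subset_toFinset {l₁ l₂ : List α} (h : l₁ ⊆ l₂) : l₁.toFinset ⊆ l₂.toFinset := by
  intro x hx
  rw [List.mem_toFinset] at *
  exact h hx

lemma prefix_of_le {l₁ l₂ L : List α} (h₁ : l₁ <+: L) (h₂ : l₂ <+: L)
    (h : l₁.length ≤ l₂.length) : l₁ <+: l₂ := by
  rcases List.prefix_or_prefix_of_prefix h₁ h₂ with h'|h'
  · exact h'
  · have : l₂ = l₁ := h'.sublist.eq_of_length (le_antisymm h'.length_le h)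
    exact this ▸ List.prefix_refl _

lemma suffix_of_le {l₁ l₂ L : List α} (h₁ : l₁ <:+ L) (h₂ : l₂ <:+ L)
    (h : l₁.length ≤ l₂.length) : l₁ <:+ l₂ := by
  rcases List.suffix_or_suffix_of_suffix h₁ h₂ with h'|h'
  · exact h'
  · have : l₂ = l₁ := h'.sublist.eq_of_length (le_antisymm h'.length_le h)
    exact this ▸ List.suffix_refl _

lemma march_cases {X : List α} {m : ℕ} {r : List α} (h : MArch X m r) :
    (X.toFinset ≠ Finset.univ ∧ m = 0 ∧ r = X) ∨
    ∃ a x m₁, X = a ++ x ∧ m = m₁ + 1 ∧ a.toFinset = Finset.univ ∧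
      (∀ b : List α, b <+: X → b.toFinset = Finset.univ → a.length ≤ b.length) ∧
      MArch x m₁ r := by
  cases h with
  | base x hx => exact Or.inl ⟨hx, rfl, rfl⟩
  | step a x m r ha hmin h => exact Or.inr ⟨a, x, m, rfl, rfl, ha, hmin, h⟩

lemma march_univ_of_step {a x : List α} (ha : a.toFinset = Finset.univ) :
    (a ++ x).toFinset = Finset.univ := by
  apply Finset.eq_univ_of_forall
  intro c
  rw [List.toFinset_append, Finset.mem_union, ha]
  exact Or.inl (Finset.mem_univ c)

lemma march_unique {x : List α} {m : ℕ} {r : List α} (h : MArch x m r) :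
    ∀ {m' : ℕ} {r' : List α}, MArch x m' r' → m = m' ∧ r = r' := by
  induction h with
  | base x hx =>
    intro m' r' h'
    rcases march_cases h' with ⟨_, hm, hr⟩ | ⟨a, x₂, m₁, hX, _, ha, _, _⟩
    · exact ⟨hm.symm, hr.symm⟩
    · exact absurd (hX ▸ march_univ_of_step ha) hx
  | step a x m r ha hmin h ih =>
    intro m' r' h'
    rcases march_cases h' with ⟨hne, _, _⟩ | ⟨a₂, x₂, m₂, hX, hm, ha₂, hmin₂, h₂⟩
    · exact absurd (march_univ_of_step ha) hne
    · have hle : a₂.length ≤ a.length := hmin₂ a (List.prefix_append a x) ha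
      have hle' : a.length ≤ a₂.length :=
        hmin a₂ (hX ▸ List.prefix_append a₂ x₂) ha₂
      have haa : a = a₂ := by
        have h₁ : a <+: a ++ x := List.prefix_append a x
        have h₂' : a₂ <+: a ++ x := hX ▸ List.prefix_append a₂ x₂
        exact (prefix_of_le h₁ h₂' hle').sublist.eq_of_length (le_antisymm hle' hle)
      subst haa
      have hxx : x = x₂ := by
        have := congrArg (List.drop a.length) hX
        simpa using this
      subst hxx
      obtain ⟨hm', hr'⟩ := ih h₂
      exact ⟨by omega, hr'⟩

lemma march_exists_aux [Nonempty α] :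
    ∀ n (x : List α), x.length ≤ n → ∃ m r, MArch x m r := by
  intro n
  induction n with
  | zero =>
    intro x hx
    have hx0 : x = [] := List.length_eq_zero_iff.mp (Nat.le_zero.mp hx)
    subst hx0
    refine ⟨0, [], MArch.base [] ?_⟩
    simp only [List.toFinset_nil]
    exact fun hc => (Finset.univ_nonempty (α := α)).ne_empty hc.symm
  | succ n ih =>
    intro x hx
    by_cases hu : x.toFinset = Finset.univ
    · have hex : ∃ p, (x.take p).toFinset = Finset.univ := ⟨x.length, by simpa⟩
      have hp : (x.take (Nat.find hex)).toFinset = Finset.univ := Nat.find_spec hex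
      set p := Nat.find hex with hpdef
      have hp1 : 1 ≤ p := by
        rcases Nat.eq_zero_or_pos p with h0 | h0
        · exfalso
          rw [h0] at hp
          simp only [List.take_zero, List.toFinset_nil] at hp
          exact (Finset.univ_nonempty (α := α)).ne_empty hp.symm
        · exact h0
      have hxne : x ≠ [] := by
        intro hc; subst hc
        simp only [List.toFinset_nil] at hu
        exact (Finset.univ_nonempty (α := α)).ne_empty hu.symm
      have hlen : (x.drop p).length ≤ n := by
        rw [List.length_drop]
        have : 1 ≤ x.length := List.length_pos_iff.mpr hxne
        omega
      obtain ⟨m, r, hmr⟩ := ih (x.drop p) hlen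
      refine ⟨m + 1, r, ?_⟩
      have hx2 : x.take p ++ x.drop p = x := List.take_append_drop p x
      have hstep := MArch.step (x.take p) (x.drop p) m r hp ?_ hmr
      · rwa [hx2] at hstep
      · intro b hb hbu
        rw [hx2] at hb
        have hbp : b = x.take b.length := List.prefix_iff_eq_take.mp hb
        have hmem : (x.take b.length).toFinset = Finset.univ := hbp ▸ hbu
        have hple : p ≤ x.length := Nat.find_le (by simpa)
        have : p ≤ b.length := Nat.find_min' hex hmem
        rw [List.length_take]
        omega
    · exact ⟨0, x, MArch.base x hu⟩

lemma march_exists [Nonempty α] (x : List α) : ∃ m r, MArch x m r :=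
  march_exists_aux x.length x le_rfl

lemma march_isUniversal {x : List α} {m : ℕ} {r : List α} (h : MArch x m r) :
    IsUniversal m x := by
  induction h with
  | base x hx =>
    intro u hu
    have : u = [] := List.length_eq_zero_iff.mp hu
    simp [this]
  | step a x m r ha hmin h ih =>
    intro u hu
    cases u with
    | nil => simp at hu
    | cons c t =>
      have hc : c ∈ a := by
        rw [← List.mem_toFinset, ha]; exact Finset.mem_univ c
      have ht : t <+ x := ih t (by simpa using hu)
      have : ([c] ++ t) <+ (a ++ x) := (List.singleton_sublist.mpr hc).append ht
      simpa using this

lemma cons_sublist_elim {c : α} : ∀ {v u x : List α}, c ∉ v → (c :: u) <+ v ++ c :: x → u <+ x := by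
  intro v
  induction v with
  | nil =>
    intro u x _ hsub
    simp only [List.nil_append] at hsub
    cases hsub with
    | cons _ h => exact (List.sublist_cons_self c u).trans h
    | cons_cons _ h => exact h
  | cons d v' ih =>
    intro u x hc hsub
    simp only [List.cons_append] at hsub
    cases hsub with
    | cons _ h => exact ih (fun hm => hc (List.mem_cons_of_mem d hm)) h
    | cons_cons _ h => exact absurd List.mem_cons_self hc

lemma march_witness [Nonempty α] {x : List α} {m : ℕ} {r : List α} (h : MArch x m r) :
    ∃ u : List α, u.length = m + 1 ∧ ¬ u <+ x := by
  induction h with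
  | base x hx =>
    have : ∃ c, c ∉ x.toFinset := by
      by_contra hc; push_neg at hc
      exact hx (Finset.eq_univ_iff_forall.mpr hc)
    obtain ⟨c, hc⟩ := this
    refine ⟨[c], rfl, fun hsub => ?_⟩
    exact hc (List.mem_toFinset.mpr (hsub.subset (List.mem_singleton_self c)))
  | step a x m r ha hmin h ih =>
    obtain ⟨u, hu, hnsub⟩ := ih
    have hane : a ≠ [] := by
      intro hc; subst hc
      simp only [List.toFinset_nil] at ha
      exact (Finset.univ_nonempty (α := α)).ne_empty ha.symm
    set a' := a.dropLast with ha'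
    set l := a.getLast hane with hl
    have hsplit : a' ++ [l] = a := List.dropLast_append_getLast hane
    have halen : a.length = a'.length + 1 := by
      rw [← hsplit]; simp
    have hlnot : l ∉ a'.toFinset := by
      intro hmem
      have hfin : a'.toFinset = Finset.univ := by
        rw [← ha]
        apply Finset.Subset.antisymm
        · exact subset_toFinset (List.IsPrefix.sublist ⟨[l], hsplit⟩).subset
        · intro y hy
          rw [← hsplit, List.toFinset_append, Finset.mem_union] at hy
          rcases hy with h1 | h1
          · exact h1
          · have : y = l := List.mem_singleton.mp (List.mem_toFinset.mp h1)
            subst this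
            exact hmem
      have hpre : a' <+: a ++ x := ⟨[l] ++ x, by rw [← List.append_assoc, hsplit]⟩
      have := hmin a' hpre hfin
      omega
    refine ⟨l :: u, by simp [hu], fun hsub => ?_⟩
    have heq2 : a ++ x = a' ++ (l :: x) := by
      rw [← hsplit, List.append_assoc, List.singleton_append]
    rw [heq2] at hsub
    exact hnsub (cons_sublist_elim (fun hm => hlnot (List.mem_toFinset.mpr hm)) hsub)

lemma isUniversal_mono [Nonempty α] {x : List α} {m j : ℕ} (hm : IsUniversal m x)
    (hj : j ≤ m) : IsUniversal j x := by
  intro u hu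
  obtain ⟨a⟩ := (inferInstance : Nonempty α)
  have h2 := hm (u ++ List.replicate (m - j) a) (by simp [hu]; omega)
  exact (List.sublist_append_left u _).trans h2

lemma univIndex_eq [Nonempty α] {x : List α} {m : ℕ} (h1 : IsUniversal m x)
    (h2 : ¬ IsUniversal (m + 1) x) : univIndex x = m := by
  apply IsGreatest.csSup_eq
  constructor
  · exact h1
  · intro j hj
    by_contra hc
    push_neg at hc
    exact h2 (isUniversal_mono hj (by omega))

lemma march_univIndex [Nonempty α] {x : List α} {m : ℕ} {r : List α} (h : MArch x m r) :
    univIndex x = m := by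
  refine univIndex_eq (march_isUniversal h) (fun hU => ?_)
  obtain ⟨u, hu, hn⟩ := march_witness h
  exact hn (hU u hu)

lemma march_append {x : List α} {m : ℕ} {r y : List α} {m' : ℕ} {r' : List α}
    (h : MArch x m r) (h' : MArch (r ++ y) m' r') : MArch (x ++ y) (m + m') r' := by
  induction h with
  | base x hx => simpa using h'
  | step a x m r ha hmin h ih =>
    have hstep := MArch.step a (x ++ y) (m + m') r' ha ?_ (ih h')
    · have : a ++ (x ++ y) = (a ++ x) ++ y := (List.append_assoc a x y).symm
      rw [this] at hstep
      have hmm : m + m' + 1 = m + 1 + m' := by omega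
      rwa [hmm] at hstep
    · intro b hb hbu
      by_cases hble : b.length ≤ (a ++ x).length
      · have hb2 : b <+: a ++ x := by
          apply prefix_of_le hb _ _
          · exact ⟨y, by rw [List.append_assoc]⟩
          · exact hble
        exact hmin b hb2 hbu
      · have := List.length_append (as := a) (bs := x)
        simp only [List.length_append] at hble
        omega

lemma march_rem_not_univ {x : List α} {m : ℕ} {r : List α} (h : MArch x m r) :
    r.toFinset ≠ Finset.univ := by
  induction h with
  | base x hx => exact hx
  | step a x m r ha hmin h ih => exact ih

lemma march_suffix {x : List α} {m : ℕ} {r : List α} (h : MArch x m r) : r <:+ x := by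
  induction h with
  | base x hx => exact List.suffix_refl x
  | step a x m r ha hmin h ih => exact ih.trans (List.suffix_append a x)

lemma march_mono {x : List α} {m : ℕ} {r : List α} (h : MArch x m r) :
    ∀ (z : List α) {m' : ℕ} {r' : List α}, MArch (z ++ x) m' r' →
      m ≤ m' ∧ (m = m' → r <:+ r') := by
  induction h with
  | base x hx =>
    intro z m' r' h'
    refine ⟨Nat.zero_le _, fun hm => ?_⟩
    rcases march_cases h' with ⟨_, hm0, hr⟩ | ⟨a, x₂, m₁, hX, hm1, _, _, _⟩
    · rw [hr]; exact List.suffix_append z x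
    · omega
  | step a x m r ha hmin h ih =>
    intro z m' r' h'
    rcases march_cases h' with ⟨hne, _, _⟩ | ⟨a₂, x₂, m₂, hX, hm, ha₂, hmin₂, h₂⟩
    · exfalso
      apply hne
      apply Finset.eq_univ_of_forall
      intro c
      have : c ∈ a.toFinset := by rw [ha]; exact Finset.mem_univ c
      rw [List.mem_toFinset] at this ⊢
      exact List.mem_append.mpr (Or.inr (List.mem_append.mpr (Or.inl this)))
    · have hzapre : (z ++ a) <+: z ++ (a ++ x) := ⟨x, by rw [List.append_assoc]⟩
      have hzau : (z ++ a).toFinset = Finset.univ := by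
        apply Finset.eq_univ_of_forall
        intro c
        have : c ∈ a.toFinset := by rw [ha]; exact Finset.mem_univ c
        rw [List.toFinset_append, Finset.mem_union]
        exact Or.inr this
      have hlen : a₂.length ≤ z.length + a.length := by
        have := hmin₂ (z ++ a) (hX ▸ hzapre) hzau
        simpa using this
      have hlenX : a₂.length + x₂.length = z.length + a.length + x.length := by
        have := congrArg List.length hX
        simp only [List.length_append] at this
        omega
      have hx2s : x₂ <:+ z ++ (a ++ x) := by
        rw [hX]; exact List.suffix_append a₂ x₂
      have hsx : x <:+ x₂ :=
        suffix_of_le ((List.suffix_append a x).trans (List.suffix_append z (a ++ x))) hx2s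
          (by omega)
      obtain ⟨z₂, hz₂⟩ := hsx
      have hih := ih z₂ (hz₂ ▸ h₂)
      exact ⟨by omega, fun hme => hih.2 (by omega)⟩

lemma march_prepend {z r y : List α} {m : ℕ} {t : List α}
    (hz : z.toFinset ⊆ r.toFinset) (hr : r.toFinset ≠ Finset.univ)
    (hm : 1 ≤ m) (h : MArch (r ++ y) m t) : MArch (z ++ (r ++ y)) m t := by
  rcases march_cases h with ⟨_, hm0, _⟩ | ⟨a, x, m₁, hX, hm1, ha, hmin, h₁⟩
  · omega
  · have hrpre : r <+: a ++ x := hX ▸ List.prefix_append r y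
    have hapre : a <+: a ++ x := List.prefix_append a x
    have hralen : r.length < a.length := by
      by_contra hcon
      push_neg at hcon
      have : a <+: r := prefix_of_le hapre hrpre hcon
      have : a.toFinset ⊆ r.toFinset := subset_toFinset this.sublist.subset
      rw [ha] at this
      exact hr (Finset.eq_univ_of_forall (fun c => this (Finset.mem_univ c)))
    have hstep := MArch.step (z ++ a) x m₁ t ?_ ?_ h₁
    · have : (z ++ a) ++ x = z ++ (a ++ x) := List.append_assoc z a x
      rw [this, ← hX] at hstep
      rwa [← hm1] at hstep
    · apply Finset.eq_univ_of_forall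
      intro c
      have : c ∈ a.toFinset := by rw [ha]; exact Finset.mem_univ c
      rw [List.toFinset_append, Finset.mem_union]
      exact Or.inr this
    · intro b hb hbu
      rw [List.append_assoc] at hb
      by_contra hble
      push_neg at hble
      simp only [List.length_append] at hble
      by_cases hbz : b.length ≤ z.length
      · have hbzpre : b <+: z := prefix_of_le hb (List.prefix_append z (a ++ x)) hbz
        have : b.toFinset ⊆ r.toFinset := (subset_toFinset hbzpre.sublist.subset).trans hz
        rw [hbu] at this
        exact hr (Finset.eq_univ_of_forall (fun c => this (Finset.mem_univ c)))
      · push_neg at hbz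
        have hzb : z <+: b := prefix_of_le (List.prefix_append z (a ++ x)) hb (by omega)
        obtain ⟨c, hc⟩ := hzb
        obtain ⟨tt, htt⟩ := hb
        have hcax : c <+: a ++ x := by
          refine ⟨tt, ?_⟩
          have : z ++ (c ++ tt) = z ++ (a ++ x) := by
            rw [← List.append_assoc, hc, htt]
          exact (List.append_cancel_left this)
        have hclen : c.length < a.length := by
          have := congrArg List.length hc
          simp only [List.length_append] at this
          omega
        have hbcu : b.toFinset = z.toFinset ∪ c.toFinset := by
          rw [← hc, List.toFinset_append]
        by_cases hcr : c.length ≤ r.length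
        · have : c <+: r := prefix_of_le hcax hrpre hcr
          have hsub : b.toFinset ⊆ r.toFinset := by
            rw [hbcu]
            exact Finset.union_subset hz (subset_toFinset this.sublist.subset)
          rw [hbu] at hsub
          exact hr (Finset.eq_univ_of_forall (fun cc => hsub (Finset.mem_univ cc)))
        · push_neg at hcr
          have hrc : r <+: c := prefix_of_le hrpre hcax (by omega)
          have hcu : c.toFinset = Finset.univ := by
            apply Finset.eq_univ_of_forall
            intro cc
            have : cc ∈ b.toFinset := by rw [hbu]; exact Finset.mem_univ cc
            rw [hbcu, Finset.mem_union] at this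
            rcases this with hcc | hcc
            · exact (subset_toFinset hrc.sublist.subset) (hz hcc)
            · exact hcc
          have := hmin c (by rw [hX]; exact hcax) hcu
          omega

end MArchDev

section SeqDev

variable [Fintype α] [DecidableEq α] [Nonempty α]

noncomputable def nxt (w r : List α) : ℕ × List α :=
  ⟨(march_exists (r ++ w)).choose, (march_exists (r ++ w)).choose_spec.choose⟩

lemma nxt_spec (w r : List α) : MArch (r ++ w) (nxt w r).1 (nxt w r).2 :=
  (march_exists (r ++ w)).choose_spec.choose_spec

noncomputable def RR (w : List α) : ℕ → List α
  | 0 => []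
  | s + 1 => (nxt w (RR w s)).2

noncomputable def DD (w : List α) (s : ℕ) : ℕ := (nxt w (RR w s)).1

lemma RR_zero (w : List α) : RR w 0 = [] := rfl

lemma RR_spec (w : List α) (s : ℕ) : MArch (RR w s ++ w) (DD w s) (RR w (s + 1)) :=
  nxt_spec w (RR w s)

end SeqDev

lemma wpow_zero (w : List α) : wpow w 0 = [] := rfl

lemma wpow_succ (w : List α) (s : ℕ) : wpow w (s + 1) = wpow w s ++ w := by
  simp [wpow, List.replicate_succ']

theorem constant_growth_of_initial_constant_growth [Fintype α] (w : List α) (k : ℕ)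
    (hk : univIndex w = k) (hk1 : 1 ≤ k)
    (h : ∀ s : ℕ, 1 ≤ s → s ≤ Fintype.card α →
      univIndex (wpow w s) = univIndex (wpow w (s - 1)) + k) :
    ∀ s : ℕ, 1 ≤ s → univIndex (wpow w s) = s * k := by
  classical
  have hne : Nonempty α := by
    by_contra hna
    have hIsE : IsEmpty α := not_nonempty_iff.mp hna
    have hall : ∀ n, IsUniversal n w := by
      intro n u hu
      cases u with
      | nil => exact List.nil_sublist w
      | cons a _ => exact (hIsE.false a).elim
    have hset : {k | IsUniversal k w} = Set.univ := Set.eq_univ_of_forall hall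
    have hnb : ¬ BddAbove (Set.univ : Set ℕ) := by
      rintro ⟨b, hb⟩
      have := hb (Set.mem_univ (b + 1))
      omega
    have h0 : univIndex w = 0 := by
      rw [univIndex, hset, csSup_of_not_bddAbove hnb, csSup_empty]
      rfl
    omega
  haveI := hne
  set σ := Fintype.card α with hσdef
  have hσ : 1 ≤ σ := Fintype.card_pos
  have hpow : ∀ s : ℕ, MArch (wpow w s) (∑ i ∈ Finset.range s, DD w i) (RR w s) := by
    intro s
    induction s with
    | zero =>
      rw [wpow_zero, RR_zero]
      simp only [Finset.range_zero, Finset.sum_empty]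
      refine MArch.base [] ?_
      simp only [List.toFinset_nil]
      exact fun hc => (Finset.univ_nonempty (α := α)).ne_empty hc.symm
    | succ s ih =>
      have := march_append ih (RR_spec w s)
      rw [← wpow_succ] at this
      rwa [Finset.sum_range_succ]
  have hUI : ∀ s, univIndex (wpow w s) = ∑ i ∈ Finset.range s, DD w i :=
    fun s => march_univIndex (hpow s)
  have hDk : ∀ i, i < σ → DD w i = k := by
    intro i hi
    have hh := h (i + 1) (by omega) (by omega)
    rw [hUI, hUI] at hh
    simp only [Nat.add_sub_cancel] at hh
    rw [Finset.sum_range_succ] at hh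
    omega
  have hchain : ∀ i, i < σ → RR w i <:+ RR w (i + 1) := by
    intro i
    induction i with
    | zero => intro _; rw [RR_zero]; exact List.nil_suffix
    | succ i ih =>
      intro hi
      obtain ⟨z, hz⟩ := ih (by omega)
      have hmm := march_mono (RR_spec w i) z
        (m' := DD w (i + 1)) (r' := RR w (i + 2))
        (by rw [← List.append_assoc, hz]; exact RR_spec w (i + 1))
      exact hmm.2 (by rw [hDk i (by omega), hDk (i + 1) (by omega)])
  have hAne0 : ∀ i, (RR w i).toFinset ≠ Finset.univ := by
    intro i
    cases i with
    | zero =>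
      rw [RR_zero]
      simp only [List.toFinset_nil]
      exact fun hc => (Finset.univ_nonempty (α := α)).ne_empty hc.symm
    | succ j => exact march_rem_not_univ (RR_spec w j)
  have hexfix : ∃ i, i < σ ∧ (RR w (i + 1)).toFinset = (RR w i).toFinset := by
    by_contra hcon
    push_neg at hcon
    have hcard : ∀ i, i ≤ σ → i ≤ (RR w i).toFinset.card := by
      intro i
      induction i with
      | zero => intro _; omega
      | succ i ih =>
        intro hi
        have h1 := ih (by omega)
        have hss : (RR w i).toFinset ⊂ (RR w (i + 1)).toFinset := by
          refine (Finset.ssubset_iff_subset_ne).mpr ⟨?_, ?_⟩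
          · exact subset_toFinset (hchain i (by omega)).sublist.subset
          · exact fun he => hcon i (by omega) he.symm
        have := Finset.card_lt_card hss
        omega
    have h1 := hcard σ le_rfl
    have h2 : (RR w σ).toFinset.card ≤ σ := Finset.card_le_univ _
    have h3 : (RR w σ).toFinset = Finset.univ := Finset.eq_univ_of_card _ (by omega)
    exact hAne0 σ h3
  obtain ⟨i, hiσ, hAeq⟩ := hexfix
  obtain ⟨z, hz⟩ := hchain i hiσ
  have hzsub : z.toFinset ⊆ (RR w i).toFinset := by
    rw [← hAeq, ← hz, List.toFinset_append]
    exact Finset.subset_union_left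
  have hDi : DD w i = k := hDk i hiσ
  have hfix : MArch (RR w (i + 1) ++ w) k (RR w (i + 1)) := by
    have := march_prepend hzsub (hAne0 i) (by omega) (hDi ▸ RR_spec w i)
    rwa [← List.append_assoc, hz] at this
  have hstabR : ∀ j, i ≤ j → RR w (j + 1) = RR w (i + 1) := by
    intro j hj
    induction j, hj using Nat.le_induction with
    | base => rfl
    | succ j hj ih =>
      have hs := RR_spec w (j + 1)
      rw [ih] at hs
      exact (march_unique hfix hs).2.symm
  have hstabD : ∀ j, i + 1 ≤ j → DD w j = k := by
    intro j hj
    obtain ⟨j', rfl⟩ : ∃ j', j = j' + 1 := ⟨j - 1, by omega⟩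
    have hs := RR_spec w (j' + 1)
    rw [hstabR j' (by omega)] at hs
    exact (march_unique hfix hs).1.symm
  have hDall : ∀ j, DD w j = k := by
    intro j
    by_cases hj : j < σ
    · exact hDk j hj
    · exact hstabD j (by omega)
  intro s _
  rw [hUI s]
  calc ∑ i ∈ Finset.range s, DD w i = ∑ _i ∈ Finset.range s, k :=
        Finset.sum_congr rfl (fun i _ => hDall i)
    _ = s * k := by simp [Finset.sum_const, Finset.card_range]
end

section
/- Let w be a word over Σ with ι(w) = k ≥ 1 such that every letter of Σ occurs exactly once in each arch of w and at most once in the remainder r(w). Then ζ(w^s) = s·k for all s ∈ ℕ. -/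
open List

variable {α : Type*}

lemma join_eq_flatten (l : List (List α)) : l.flatten = l.flatten := rfl

lemma wpow_eq_flatten (w : List α) (s : ℕ) : wpow w s = (List.replicate s w).flatten := rfl

lemma join_archesAux [Fintype α] [DecidableEq α] (n : ℕ) (w : List α) :
    (archesAux n w).flatten ++ remAux n w = w := by
  induction n generalizing w with
  | zero => simp [archesAux, remAux]
  | succ n ih =>
    rw [archesAux, remAux]
    cases h : (List.range' 1 w.length).find?
        (fun m => decide ((w.take m).toFinset = Finset.univ)) with
    | none => simp
    | some m => simp [flatten_cons, append_assoc, ih, take_append_drop]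

lemma remAux_ne_univ [Fintype α] [DecidableEq α] [Nonempty α] :
    ∀ n (w : List α), w.length ≤ n → (remAux n w).toFinset ≠ Finset.univ := by
  intro n
  induction n with
  | zero =>
    intro w hw
    have : w = [] := by cases w <;> simp_all
    subst this
    simp [remAux]
    exact fun h => (Finset.univ_nonempty (α := α)).ne_empty h.symm
  | succ n ih =>
    intro w hw
    rw [remAux]
    cases h : (List.range' 1 w.length).find?
        (fun m => decide ((w.take m).toFinset = Finset.univ)) with
    | none =>
      rcases eq_or_ne w [] with rfl | hne
      · simpa using fun h => (Finset.univ_nonempty (α := α)).ne_empty h.symm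
      · have hlen : 0 < w.length := length_pos_iff.mpr hne
        have := List.find?_eq_none.mp h w.length (by rw [List.mem_range'_1]; omega)
        simpa [take_length] using this
    | some m =>
      have hm := List.mem_of_find?_eq_some h
      rw [List.mem_range'_1] at hm
      exact ih _ (by simp [List.length_drop]; omega)

/-- If every block of `L` contains every letter, any word of length at most
`L.length` embeds into `L.flatten`. -/
lemma sublist_flatten_of_full [Fintype α] (u : List α) (L : List (List α))
    (hL : ∀ B ∈ L, ∀ b : α, b ∈ B) (hlen : u.length ≤ L.length) :
    u.Sublist L.flatten := by
  induction u generalizing L with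
  | nil => exact nil_sublist _
  | cons b u ih =>
    cases L with
    | nil => simp at hlen
    | cons B L =>
      rw [flatten_cons]
      have h1 : [b] <+ B := singleton_sublist.mpr (hL B mem_cons_self b)
      exact h1.append (ih L (fun B' hB' => hL B' (mem_cons_of_mem _ hB'))
        (by simpa using hlen))

lemma count_wpow [DecidableEq α] (w : List α) (a : α) (s : ℕ) :
    (wpow w s).count a = s * w.count a := by
  induction s with
  | zero => simp [wpow]
  | succ s ih =>
    rw [wpow_eq_flatten] at ih ⊢
    rw [replicate_succ, flatten_cons, count_append, ih]
    ring

lemma wpow_sublist (x r w : List α) (hx : x ++ r = w) (s : ℕ) :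
    (wpow x s).Sublist (wpow w s) := by
  induction s with
  | zero => simp [wpow]
  | succ s ih =>
    simp only [wpow_eq_flatten] at ih ⊢
    rw [replicate_succ, replicate_succ, flatten_cons, flatten_cons]
    have h : x ++ (replicate s x).flatten
        <+ x ++ (r ++ (replicate s w).flatten) :=
      (Sublist.refl x).append (ih.trans (sublist_append_right _ _))
    rwa [← append_assoc, hx] at h

theorem circIndex_pow_of_simple_arches [Fintype α] [DecidableEq α] (w : List α) (k : ℕ)
    (hk : univIndex w = k) (hk1 : 1 ≤ k)
    (harch : ∀ B ∈ arches w, ∀ a : α, B.count a = 1)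
    (hrem : ∀ a : α, (rem w).count a ≤ 1) :
    ∀ s : ℕ, 1 ≤ s → circIndex (wpow w s) = s * k := by
  intro s hs
  cases isEmpty_or_nonempty α with
  | inl hα =>
    exfalso
    have hmem : ∀ m : ℕ, m ∈ {k | IsUniversal k w} := by
      intro m u hu
      cases u with
      | nil => exact nil_sublist _
      | cons a _ => exact (hα.elim a)
    have hnb : ¬ BddAbove {k | IsUniversal k w} := by
      rintro ⟨b, hb⟩
      have := hb (hmem (b + 1))
      omega
    have : univIndex w = 0 := by
      rw [univIndex, csSup_of_not_bddAbove hnb, csSup_empty]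
      rfl
    omega
  | inr hα =>
    have hfull : ∀ B ∈ arches w, ∀ b : α, b ∈ B := by
      intro B hB b
      have := harch B hB b
      exact List.count_pos_iff.mp (by omega)
    obtain ⟨a, ha⟩ : ∃ a : α, a ∉ rem w := by
      by_contra hcon
      push_neg at hcon
      exact remAux_ne_univ _ _ le_rfl
        (Finset.eq_univ_iff_forall.mpr fun x => mem_toFinset.mpr (hcon x))
    have hw : (arches w).flatten ++ rem w = w := join_archesAux _ _
    have hcount : w.count a = (arches w).length := by
      conv_lhs => rw [← hw]
      rw [count_append, count_eq_zero.mpr ha, add_zero, count_flatten]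
      have : (arches w).map (List.count a) = List.replicate (arches w).length 1 := by
        rw [List.eq_replicate_iff]
        refine ⟨by simp, ?_⟩
        intro x hx
        obtain ⟨B, hB, rfl⟩ := mem_map.mp hx
        exact harch B hB a
      rw [this, sum_replicate, smul_eq_mul, mul_one]
    have hnuniv : IsUniversal (arches w).length w := by
      intro u hu
      refine (sublist_flatten_of_full u (arches w) hfull hu.le).trans ?_
      have h2 : (arches w).flatten <+ (arches w).flatten ++ rem w :=
        sublist_append_left _ _
      rwa [hw] at h2
    have hub : ∀ m ∈ {k | IsUniversal k w}, m ≤ (arches w).length := by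
      intro m hm
      have h1 := (hm (List.replicate m a) (by simp)).count_le a
      simpa [hcount] using h1
    have huniv : univIndex w = (arches w).length :=
      le_antisymm (csSup_le ⟨_, hnuniv⟩ hub) (le_csSup ⟨_, hub⟩ hnuniv)
    have hkn : (arches w).length = k := by rw [← hk, huniv]
    -- lower bound: w^s itself is (s*k)-universal
    have hlow : IsUniversal (s * k) (wpow w s ++ []) := by
      rw [append_nil]
      intro u hu
      have h1 : u.Sublist ((List.replicate s (arches w)).flatten).flatten := by
        apply sublist_flatten_of_full
        · intro B hB b
          rw [mem_flatten] at hB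
          obtain ⟨l, hl, hBl⟩ := hB
          rw [eq_of_mem_replicate hl] at hBl
          exact hfull B hBl b
        · rw [length_flatten]
          simp only [map_replicate, sum_replicate, smul_eq_mul, hkn]
          omega
      have h2 : ((List.replicate s (arches w)).flatten).flatten
          = wpow (arches w).flatten s := by
        rw [flatten_flatten, map_replicate, wpow_eq_flatten]
      exact h1.trans (h2 ▸ wpow_sublist (arches w).flatten (rem w) w hw s)
    have hmem : s * k ∈ {m | ∃ u v : List α, wpow w s = u ++ v ∧ IsUniversal m (v ++ u)} :=
      ⟨[], wpow w s, (nil_append _).symm, hlow⟩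
    have hub2 : ∀ m ∈ {m | ∃ u v : List α, wpow w s = u ++ v ∧ IsUniversal m (v ++ u)},
        m ≤ s * k := by
      rintro m ⟨u, v, huv, hU⟩
      have h1 := (hU (List.replicate m a) (by simp)).count_le a
      have h2 : (v ++ u).count a = s * k := by
        rw [count_append, Nat.add_comm, ← count_append, ← huv, count_wpow, hcount, hkn]
      simpa [h2] using h1
    exact le_antisymm (csSup_le ⟨_, hmem⟩ hub2) (le_csSup ⟨_, hub2⟩ hmem)
end
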